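/- Let A be an n×n real matrix (n ≥ 2) that is irreducible, entrywise nonnegative, symmetric and positive semidefinite, and let x ∈ ℝ^n have all entries positive. Then there exists a log-concavity index of A associated with x, and there exists a log-convexity index of A associated with x. -/

import Mathlib

open Matrix Filter

/-- A square matrix is irreducible if no permutation similarity puts it in block
upper triangular form; equivalently, for every nonempty proper subset `S` of indices
there are `i ∈ S` and `j ∉ S` with `A i j ≠ 0`. -/
def IsIrreducibleMatrix {n : ℕ} (A : Matrix (Fin n) (Fin n) ℝ) : Prop :=
  ∀ S : Finset (Fin n), S.Nonempty → S ≠ Finset.univ → ∃ i ∈ S, ∃ j, j ∉ S ∧ A i j ≠ 0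

/-- `i₀` is a log-concavity index of `A` associated with `x`: for all sufficiently large `k`,
the ratio `(A^k x)_{i₀} / (A^{k-1} x)_{i₀}` attains the maximum over all indices. -/
def IsLogConcavityIndex {n : ℕ} (A : Matrix (Fin n) (Fin n) ℝ) (x : Fin n → ℝ)
    (i₀ : Fin n) : Prop :=
  ∃ K : ℕ, 0 < K ∧ ∀ k : ℕ, K ≤ k →
    ((A ^ k).mulVec x i₀) / ((A ^ (k - 1)).mulVec x i₀)
      = ⨆ i, ((A ^ k).mulVec x i) / ((A ^ (k - 1)).mulVec x i)

/-- `i₀` is a log-convexity index of `A` associated with `x`: for all sufficiently large `k`,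
the ratio `(A^k x)_{i₀} / (A^{k-1} x)_{i₀}` attains the minimum over all indices. -/
def IsLogConvexityIndex {n : ℕ} (A : Matrix (Fin n) (Fin n) ℝ) (x : Fin n → ℝ)
    (i₀ : Fin n) : Prop :=
  ∃ K : ℕ, 0 < K ∧ ∀ k : ℕ, K ≤ k →
    ((A ^ k).mulVec x i₀) / ((A ^ (k - 1)).mulVec x i₀)
      = ⨅ i, ((A ^ k).mulVec x i) / ((A ^ (k - 1)).mulVec x i)


lemma aux_exists_top {α : Type*} (P : α → α → Prop)
    (htrans : ∀ a b c, P a b → P b c → P a c)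
    (htot : ∀ a b, P a b ∨ P b a) :
    ∀ s : Finset α, s.Nonempty → ∃ a ∈ s, ∀ b ∈ s, P a b := by
  intro s
  induction s using Finset.cons_induction with
  | empty => intro h; exact absurd rfl h.ne_empty
  | cons x s hx ih =>
    intro _
    have hPxx : ∀ a : α, P a a := fun a => (htot a a).elim id id
    rcases s.eq_empty_or_nonempty with rfl | hs
    · exact ⟨x, Finset.mem_cons_self x _, fun b hb => by
        rcases Finset.mem_cons.mp hb with rfl | hb
        · exact hPxx b
        · exact absurd hb (Finset.notMem_empty b)⟩
    · obtain ⟨m, hm, hmax⟩ := ih hs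
      rcases htot x m with h | h
      · refine ⟨x, Finset.mem_cons_self x _, fun b hb => ?_⟩
        rcases Finset.mem_cons.mp hb with rfl | hb
        · exact hPxx b
        · exact htrans _ _ _ h (hmax b hb)
      · refine ⟨m, Finset.mem_cons_of_mem hm, fun b hb => ?_⟩
        rcases Finset.mem_cons.mp hb with rfl | hb
        · exact h
        · exact hmax b hb

/-- An exponential sum with positive bases is eventually of constant (weak) sign. -/
lemma aux_expsum_sign {ι : Type*} [DecidableEq ι] (c t : ι → ℝ) :
    ∀ s : Finset ι, (∀ i ∈ s, 0 < t i) →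
      (∃ K : ℕ, ∀ k ≥ K, 0 ≤ ∑ i ∈ s, c i * t i ^ k) ∨
      (∃ K : ℕ, ∀ k ≥ K, ∑ i ∈ s, c i * t i ^ k ≤ 0) := by
  intro s
  induction s using Finset.strongInduction with
  | _ s ih =>
    intro ht
    rcases s.eq_empty_or_nonempty with rfl | hs
    · exact Or.inl ⟨0, fun k _ => by simp⟩
    set T := s.sup' hs t with hTdef
    obtain ⟨i0, hi0, hTi0⟩ := Finset.exists_mem_eq_sup' hs t
    have hT0 : 0 < T := by rw [hTdef, hTi0]; exact ht i0 hi0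
    set C := ∑ i ∈ s.filter (fun i => t i = T), c i with hCdef
    by_cases hC0 : C = 0
    · -- drop the top-level terms and recurse
      have hrw : ∀ k : ℕ, ∑ i ∈ s, c i * t i ^ k
          = ∑ i ∈ s.filter (fun i => ¬ t i = T), c i * t i ^ k := by
        intro k
        have hsplit := Finset.sum_filter_add_sum_filter_not s (fun i => t i = T)
          (fun i => c i * t i ^ k)
        have hzero : ∑ i ∈ s.filter (fun i => t i = T), c i * t i ^ k = 0 := by
          have h1 : ∑ i ∈ s.filter (fun i => t i = T), c i * t i ^ k
              = (∑ i ∈ s.filter (fun i => t i = T), c i) * T ^ k := by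
            rw [Finset.sum_mul]
            refine Finset.sum_congr rfl fun i hi => ?_
            rw [(Finset.mem_filter.mp hi).2]
          rw [h1, ← hCdef, hC0, zero_mul]
        linarith [hsplit]
      have hsub : s.filter (fun i => ¬ t i = T) ⊂ s := by
        refine Finset.ssubset_iff_of_subset (Finset.filter_subset _ _) |>.mpr ?_
        exact ⟨i0, hi0, by simp [hTi0.symm]; exact fun _ => hTdef.symm⟩
      rcases ih _ hsub (fun i hi => ht i (Finset.filter_subset _ _ hi)) with ⟨K, hK⟩ | ⟨K, hK⟩
      · exact Or.inl ⟨K, fun k hk => by rw [hrw k]; exact hK k hk⟩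
      · exact Or.inr ⟨K, fun k hk => by rw [hrw k]; exact hK k hk⟩
    · -- the top-level coefficient decides the sign
      have hlim : Tendsto (fun k : ℕ => ∑ i ∈ s, c i * (t i / T) ^ k) atTop (nhds C) := by
        have hCsum : C = ∑ i ∈ s, (if t i = T then c i else 0) := by
          rw [hCdef, Finset.sum_filter]
        rw [hCsum]
        refine tendsto_finset_sum _ fun i hi => ?_
        by_cases hiT : t i = T
        · simp only [hiT, div_self hT0.ne', one_pow, mul_one, if_pos]
          exact tendsto_const_nhds
        · simp only [hiT, if_neg, if_false]
          have h1 : t i / T < 1 := by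
            rw [div_lt_one hT0]
            exact lt_of_le_of_ne (hTdef ▸ Finset.le_sup' t hi) hiT
          have h0 : 0 ≤ t i / T := div_nonneg (ht i hi).le hT0.le
          simpa using (tendsto_pow_atTop_nhds_zero_of_lt_one h0 h1).const_mul (c i)
      have hfactor : ∀ k : ℕ, ∑ i ∈ s, c i * t i ^ k
          = (∑ i ∈ s, c i * (t i / T) ^ k) * T ^ k := by
        intro k
        rw [Finset.sum_mul]
        refine Finset.sum_congr rfl fun i hi => ?_
        rw [mul_assoc, div_pow, div_mul_cancel₀ _ (pow_ne_zero k hT0.ne')]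
      rcases lt_or_gt_of_ne hC0 with hneg | hpos
      · right
        obtain ⟨K, hK⟩ := Filter.eventually_atTop.mp (hlim.eventually (eventually_lt_nhds hneg))
        refine ⟨K, fun k hk => ?_⟩
        rw [hfactor k]
        exact mul_nonpos_iff.mpr (Or.inr ⟨(hK k hk).le, (pow_pos hT0 k).le⟩)
      · left
        obtain ⟨K, hK⟩ := Filter.eventually_atTop.mp (hlim.eventually (eventually_gt_nhds hpos))
        refine ⟨K, fun k hk => ?_⟩
        rw [hfactor k]
        exact mul_nonneg (hK k hk).le (pow_pos hT0 k).le

/-- If `A` is an `n × n` (`n ≥ 2`) irreducible, entrywise nonnegative,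
symmetric positive semidefinite real matrix and `x` is entrywise positive, then `A` has a
log-concavity index associated with `x` and a log-convexity index associated with `x`. -/
theorem exists_logConcavity_and_logConvexity_index {n : ℕ} (hn : 2 ≤ n)
    (A : Matrix (Fin n) (Fin n) ℝ) (x : Fin n → ℝ)
    (hirr : IsIrreducibleMatrix A) (hnonneg : ∀ i j, 0 ≤ A i j)
    (hpsd : A.PosSemidef) (hx : ∀ i, 0 < x i) :
    (∃ i₁, IsLogConcavityIndex A x i₁) ∧ (∃ i₂, IsLogConvexityIndex A x i₂) := by
  classical
  have hi0 : (0 : ℕ) < n := by omega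
  haveI hNe : Nonempty (Fin n) := ⟨⟨0, hi0⟩⟩
  set i0 : Fin n := ⟨0, hi0⟩
  -- Step 1: positivity of all iterates
  have hstep : ∀ (y : Fin n → ℝ), (∀ i, 0 < y i) → ∀ i, 0 < A.mulVec y i := by
    intro y hy i
    have hne : ({i} : Finset (Fin n)) ≠ Finset.univ := by
      intro h
      have hc := congrArg Finset.card h
      simp [Finset.card_univ] at hc
      omega
    obtain ⟨i', hi', j, hj, hAij⟩ := hirr {i} (Finset.singleton_nonempty i) hne
    rw [Finset.mem_singleton] at hi'
    subst hi'
    have hApos : 0 < A i' j := lt_of_le_of_ne (hnonneg i' j) (Ne.symm hAij)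
    have hmv : A.mulVec y i' = ∑ l, A i' l * y l := by
      simp [Matrix.mulVec, dotProduct]
    rw [hmv]
    exact Finset.sum_pos' (fun l _ => mul_nonneg (hnonneg i' l) (hy l).le)
      ⟨j, Finset.mem_univ j, mul_pos hApos (hy j)⟩
  have hpos : ∀ (k : ℕ) (i : Fin n), 0 < (A ^ k).mulVec x i := by
    intro k
    induction k with
    | zero => simpa [Matrix.one_mulVec] using hx
    | succ k ihk =>
      intro i
      rw [pow_succ', ← Matrix.mulVec_mulVec]
      exact hstep _ ihk i
  -- Step 2: spectral representation of the iterates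
  have hH : A.IsHermitian := hpsd.1
  set U : Matrix (Fin n) (Fin n) ℝ := (hH.eigenvectorUnitary : Matrix (Fin n) (Fin n) ℝ)
    with hUdef
  set μ : Fin n → ℝ := hH.eigenvalues with hμdef
  have hμ0 : ∀ j, 0 ≤ μ j := fun j => hpsd.eigenvalues_nonneg j
  have hUU : star U * U = 1 := Matrix.mem_unitaryGroup_iff'.mp hH.eigenvectorUnitary.2
  have hUU' : U * star U = 1 := Matrix.mem_unitaryGroup_iff.mp hH.eigenvectorUnitary.2
  have hspec : A = U * Matrix.diagonal μ * star U := by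
    have h := hH.spectral_theorem
    have h2 : (RCLike.ofReal ∘ hH.eigenvalues : Fin n → ℝ) = μ := by
      funext j; simp [hμdef]
    rw [h2] at h
    exact h
  have hpow : ∀ k : ℕ, A ^ k = U * Matrix.diagonal (fun j => μ j ^ k) * star U := by
    intro k
    induction k with
    | zero =>
      simp only [pow_zero]
      rw [show (Matrix.diagonal fun _ : Fin n => (1 : ℝ)) = 1 from Matrix.diagonal_one,
        Matrix.mul_one, hUU']
    | succ k ihk =>
      calc A ^ (k + 1) = A ^ k * A := pow_succ A k
        _ = (U * Matrix.diagonal (fun j => μ j ^ k) * star U)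
              * (U * Matrix.diagonal μ * star U) := by rw [ihk, ← hspec]
        _ = U * (Matrix.diagonal (fun j => μ j ^ k) * ((star U * U)
              * (Matrix.diagonal μ * star U))) := by
          simp only [Matrix.mul_assoc]
        _ = U * (Matrix.diagonal (fun j => μ j ^ k) * Matrix.diagonal μ) * star U := by
          rw [hUU, Matrix.one_mul]; try simp only [Matrix.mul_assoc]
        _ = U * Matrix.diagonal (fun j => μ j ^ (k + 1)) * star U := by
          rw [Matrix.diagonal_mul_diagonal]
          simp only [← pow_succ]
  set w : Fin n → ℝ := (star U).mulVec x with hwdef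
  set cm : Fin n → Fin n → ℝ := fun i j => U i j * w j with hcmdef
  have hrep : ∀ (k : ℕ) (i : Fin n), (A ^ k).mulVec x i = ∑ j, cm i j * μ j ^ k := by
    intro k i
    rw [hpow k, ← Matrix.mulVec_mulVec, ← Matrix.mulVec_mulVec]
    have h1 : (Matrix.diagonal (fun j => μ j ^ k)).mulVec w = fun j => μ j ^ k * w j := by
      funext j
      rw [Matrix.mulVec_diagonal]
    rw [← hwdef, h1]
    simp only [Matrix.mulVec, dotProduct, hcmdef]
    refine Finset.sum_congr rfl fun j _ => by ring
  -- Step 3: pairwise eventual comparability of the ratios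
  have hpair : ∀ i j : Fin n, ∃ K : ℕ, 2 ≤ K ∧
      ((∀ k ≥ K, (A ^ k).mulVec x j / (A ^ (k - 1)).mulVec x j
          ≤ (A ^ k).mulVec x i / (A ^ (k - 1)).mulVec x i) ∨
       (∀ k ≥ K, (A ^ k).mulVec x i / (A ^ (k - 1)).mulVec x i
          ≤ (A ^ k).mulVec x j / (A ^ (k - 1)).mulVec x j)) := by
    intro i j
    set s : Finset (Fin n × Fin n) :=
      Finset.univ.filter (fun p => 0 < μ p.1 ∧ 0 < μ p.2) with hsdef
    set tf : Fin n × Fin n → ℝ := fun p => μ p.1 * μ p.2 with htfdef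
    set cf : Fin n × Fin n → ℝ :=
      fun p => (cm i p.1 * cm j p.2 - cm j p.1 * cm i p.2) / μ p.2 with hcfdef
    have htf : ∀ p ∈ s, 0 < tf p := by
      intro p hp
      obtain ⟨h1, h2⟩ := (Finset.mem_filter.mp hp).2
      exact mul_pos h1 h2
    have hN : ∀ k : ℕ, 2 ≤ k →
        (A ^ k).mulVec x i * (A ^ (k - 1)).mulVec x j
          - (A ^ k).mulVec x j * (A ^ (k - 1)).mulVec x i
        = ∑ p ∈ s, cf p * tf p ^ k := by
      intro k hk
      rw [hrep k i, hrep k j, hrep (k-1) i, hrep (k-1) j]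
      rw [Finset.sum_mul_sum, Finset.sum_mul_sum, ← Finset.sum_sub_distrib]
      simp only [← Finset.sum_sub_distrib]
      rw [← Finset.sum_product']
      have hvan : ∀ p ∈ (Finset.univ ×ˢ Finset.univ : Finset (Fin n × Fin n)),
          (cm i p.1 * μ p.1 ^ k * (cm j p.2 * μ p.2 ^ (k - 1))
            - cm j p.1 * μ p.1 ^ k * (cm i p.2 * μ p.2 ^ (k - 1))) ≠ 0 →
          (0 < μ p.1 ∧ 0 < μ p.2) := by
        intro p _ hne
        by_contra hcon
        rcases not_and_or.mp hcon with h1 | h2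
        · have : μ p.1 = 0 := le_antisymm (not_lt.mp h1) (hμ0 p.1)
          apply hne
          rw [this, zero_pow (by omega : k ≠ 0)]
          ring
        · have : μ p.2 = 0 := le_antisymm (not_lt.mp h2) (hμ0 p.2)
          apply hne
          rw [this, zero_pow (by omega : k - 1 ≠ 0)]
          ring
      rw [← Finset.sum_filter_of_ne hvan]
      have hsets : (Finset.univ ×ˢ Finset.univ : Finset (Fin n × Fin n)).filter
          (fun p => 0 < μ p.1 ∧ 0 < μ p.2) = s := by
        rw [hsdef, Finset.univ_product_univ]
      rw [hsets]
      refine Finset.sum_congr rfl fun p hp => ?_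
      obtain ⟨h1, h2⟩ := (Finset.mem_filter.mp hp).2
      have hk1 : μ p.2 ^ k = μ p.2 ^ (k - 1) * μ p.2 := by
        conv_lhs => rw [show k = (k - 1) + 1 by omega]
        rw [pow_succ]
      simp only [hcfdef, htfdef, mul_pow]
      rw [hk1]
      field_simp
    rcases aux_expsum_sign cf tf s htf with ⟨K0, hK0⟩ | ⟨K0, hK0⟩
    · refine ⟨max K0 2, le_max_right _ _, Or.inl fun k hk => ?_⟩
      have h2 : 2 ≤ k := le_trans (le_max_right _ _) hk
      rw [div_le_div_iff₀ (hpos (k-1) j) (hpos (k-1) i)]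
      have hsign := hK0 k (le_trans (le_max_left _ _) hk)
      rw [← hN k h2] at hsign
      linarith
    · refine ⟨max K0 2, le_max_right _ _, Or.inr fun k hk => ?_⟩
      have h2 : 2 ≤ k := le_trans (le_max_right _ _) hk
      rw [div_le_div_iff₀ (hpos (k-1) i) (hpos (k-1) j)]
      have hsign := hK0 k (le_trans (le_max_left _ _) hk)
      rw [← hN k h2] at hsign
      linarith
  -- Step 4: a common threshold and a stable extremal index
  choose Kf hKf2 hKfor using hpair
  set Km : ℕ := Finset.univ.sup (fun p : Fin n × Fin n => Kf p.1 p.2) with hKm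
  have hKmge : ∀ i j : Fin n, Kf i j ≤ Km :=
    fun i j => Finset.le_sup (f := fun p : Fin n × Fin n => Kf p.1 p.2)
      (Finset.mem_univ (i, j))
  have hKm2 : 2 ≤ Km := le_trans (hKf2 i0 i0) (hKmge i0 i0)
  have htotmax : ∀ i j : Fin n,
      (∀ k ≥ Km, (A ^ k).mulVec x j / (A ^ (k - 1)).mulVec x j
          ≤ (A ^ k).mulVec x i / (A ^ (k - 1)).mulVec x i) ∨
      (∀ k ≥ Km, (A ^ k).mulVec x i / (A ^ (k - 1)).mulVec x i
          ≤ (A ^ k).mulVec x j / (A ^ (k - 1)).mulVec x j) := by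
    intro i j
    rcases hKfor i j with h | h
    · exact Or.inl fun k hk => h k (le_trans (hKmge i j) hk)
    · exact Or.inr fun k hk => h k (le_trans (hKmge i j) hk)
  obtain ⟨i₁, -, hmax⟩ := aux_exists_top
    (fun i j => ∀ k ≥ Km, (A ^ k).mulVec x j / (A ^ (k - 1)).mulVec x j
      ≤ (A ^ k).mulVec x i / (A ^ (k - 1)).mulVec x i)
    (fun a b c hab hbc k hk => le_trans (hbc k hk) (hab k hk))
    htotmax Finset.univ ⟨i0, Finset.mem_univ i0⟩
  obtain ⟨i₂, -, hmin⟩ := aux_exists_top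
    (fun i j => ∀ k ≥ Km, (A ^ k).mulVec x i / (A ^ (k - 1)).mulVec x i
      ≤ (A ^ k).mulVec x j / (A ^ (k - 1)).mulVec x j)
    (fun a b c hab hbc k hk => le_trans (hab k hk) (hbc k hk))
    (fun i j => htotmax j i) Finset.univ ⟨i0, Finset.mem_univ i0⟩
  constructor
  · refine ⟨i₁, Km, by omega, fun k hk => ?_⟩
    refine le_antisymm (le_ciSup (f := fun i => (A ^ k).mulVec x i / (A ^ (k - 1)).mulVec x i)
      (Set.Finite.bddAbove (Set.finite_range _)) i₁) (ciSup_le fun j => ?_)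
    exact hmax j (Finset.mem_univ j) k hk
  · refine ⟨i₂, Km, by omega, fun k hk => ?_⟩
    exact le_antisymm (le_ciInf fun j => hmin j (Finset.mem_univ j) k hk)
      (ciInf_le (f := fun i => (A ^ k).mulVec x i / (A ^ (k - 1)).mulVec x i)
        (Set.Finite.bddBelow (Set.finite_range _)) i₂)
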